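/- arXiv:1205.1170 — 9 statements merged into one kernel-verified Lean document; each statement's English description precedes it below -/
import Mathlib

section
/- In a 1-2 metric space, if u1, u2, u3, u4 are four distinct points with dist(u1,u2) ≠ dist(u3,u4), then the line through u1,u2 is different from the line through u3,u4. -/
def line {α : Type*} [MetricSpace α] (u v : α) : Set α :=
  {p | dist p u + dist u v = dist p v ∨ dist u p + dist p v = dist u v ∨
       dist u v + dist v p = dist u p}

def OneTwo (α : Type*) [MetricSpace α] : Prop :=
  ∀ x y : α, x ≠ y → dist x y = 1 ∨ dist x y = 2

def Twins {α : Type*} [MetricSpace α] (u v : α) : Prop :=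
  dist u v = 2 ∧ ∀ w : α, w ≠ u → w ≠ v → dist u w = dist v w

def linesOf (α : Type*) [MetricSpace α] : Set (Set α) :=
  {L | ∃ u v : α, u ≠ v ∧ L = line u v}

lemma dist_eq_one_of_line {α : Type*} [MetricSpace α] (h12 : OneTwo α)
    (c d p : α) (hcd : dist c d = 2) (hpc : p ≠ c) (hpd : p ≠ d)
    (hp : p ∈ line c d) : dist p c = 1 ∧ dist p d = 1 := by
  have e1 := dist_comm c p
  have e2 := dist_comm d p
  rcases h12 p c hpc with k1 | k1 <;> rcases h12 p d hpd with k2 | k2 <;>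
    rcases hp with h | h | h <;> constructor <;> linarith

lemma key {α : Type*} [MetricSpace α] (h12 : OneTwo α)
    (a b c d : α) (hab : dist a b = 1) (hcd : dist c d = 2)
    (hac : a ≠ c) (had : a ≠ d) (hbc : b ≠ c) (hbd : b ≠ d) :
    line a b ≠ line c d := by
  intro heq
  have hma : a ∈ line c d := heq ▸ Or.inl (by simp)
  have hmb : b ∈ line c d := heq ▸ Or.inr (Or.inl (by simp))
  obtain ⟨ha1, -⟩ := dist_eq_one_of_line h12 c d a hcd hac had hma
  obtain ⟨hb1, -⟩ := dist_eq_one_of_line h12 c d b hcd hbc hbd hmb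
  have hmc : c ∈ line a b := heq ▸ Or.inr (Or.inl (by simp))
  have e1 := dist_comm a c
  have e2 := dist_comm b c
  rcases hmc with h | h | h <;> linarith

theorem stmt1 {α : Type*} [MetricSpace α] (h12 : OneTwo α)
    (u₁ u₂ u₃ u₄ : α)
    (h : [u₁, u₂, u₃, u₄].Pairwise (· ≠ ·))
    (hd : dist u₁ u₂ ≠ dist u₃ u₄) :
    line u₁ u₂ ≠ line u₃ u₄ := by
  simp only [List.pairwise_cons, List.mem_cons, List.mem_singleton,
    List.not_mem_nil] at h
  obtain ⟨h1, h2, h3, -⟩ := h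
  have h12' : u₁ ≠ u₂ := h1 u₂ (by simp)
  have h13 : u₁ ≠ u₃ := h1 u₃ (by simp)
  have h14 : u₁ ≠ u₄ := h1 u₄ (by simp)
  have h23 : u₂ ≠ u₃ := h2 u₃ (by simp)
  have h24 : u₂ ≠ u₄ := h2 u₄ (by simp)
  have h34 : u₃ ≠ u₄ := h3 u₄ (by simp)
  rcases h12 u₁ u₂ h12' with ha | ha <;> rcases h12 u₃ u₄ h34 with hb | hb
  · exact absurd (ha.trans hb.symm) hd
  · exact key h12 u₁ u₂ u₃ u₄ ha hb h13 h14 h23 h24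
  · exact (key h12 u₃ u₄ u₁ u₂ hb ha h13.symm h23.symm h14.symm h24.symm).symm
  · exact absurd (ha.trans hb.symm) hd
end

section
/- In a 1-2 metric space, if u1, u2, u3 are three distinct points with dist(u1,u2) = dist(u2,u3) = 2, then the line through u1,u2 differs from the line through u2,u3. -/
theorem stmt2 {α : Type*} [MetricSpace α] (h12 : OneTwo α)
    (u₁ u₂ u₃ : α) (h : [u₁, u₂, u₃].Pairwise (· ≠ ·))
    (h1 : dist u₁ u₂ = 2) (h2 : dist u₂ u₃ = 2) :
    line u₁ u₂ ≠ line u₂ u₃ := by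
  simp only [List.pairwise_cons, List.mem_cons] at h
  obtain ⟨ha, hb, -⟩ := h
  have h13 : u₁ ≠ u₃ := ha u₃ (by simp)
  have hmem : u₃ ∈ line u₂ u₃ := by
    right; left; simp
  intro heq
  rw [← heq] at hmem
  rcases hmem with hc | hc | hc
  · rw [h1, dist_comm u₃ u₂, h2] at hc
    have h0 : dist u₃ u₁ = 0 := by linarith
    exact h13 (dist_eq_zero.mp h0).symm
  · rw [h1, dist_comm u₃ u₂, h2] at hc
    exact h13 (dist_eq_zero.mp (by linarith))
  · rw [h1, h2] at hc
    rcases h12 u₁ u₃ h13 with hd | hd <;> rw [hd] at hc <;> linarith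
end

section
/- In a 1-2 metric space, if u1, u2, u3 are three distinct points with dist(u1,u2) = dist(u2,u3) = 1 and u1, u3 are not twins, then the line through u1,u2 differs from the line through u2,u3. -/
lemma mem_line_iff {α : Type*} [MetricSpace α] (h12 : OneTwo α) {u v p : α}
    (huv : dist u v = 1) (hpu : p ≠ u) (hpv : p ≠ v) :
    p ∈ line u v ↔ dist p u + dist p v = 3 := by
  have a := h12 p u hpu
  have b := h12 p v hpv
  simp only [line, Set.mem_setOf_eq, dist_comm u p, dist_comm v p, huv]
  rcases a with a | a <;> rcases b with b | b <;> rw [a, b] <;> norm_num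

theorem stmt3 {α : Type*} [MetricSpace α] (h12 : OneTwo α)
    (u₁ u₂ u₃ : α) (h : [u₁, u₂, u₃].Pairwise (· ≠ ·))
    (h1 : dist u₁ u₂ = 1) (h2 : dist u₂ u₃ = 1)
    (ht : ¬ Twins u₁ u₃) :
    line u₁ u₂ ≠ line u₂ u₃ := by
  simp only [List.pairwise_cons, List.mem_cons, List.mem_singleton] at h
  have hne12 : u₁ ≠ u₂ := h.1 u₂ (by simp)
  have hne13 : u₁ ≠ u₃ := h.1 u₃ (by simp)
  have hne23 : u₂ ≠ u₃ := h.2.1 u₃ (by simp)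
  intro heq
  rcases h12 u₁ u₃ hne13 with h3 | h3
  · have hmem : u₃ ∈ line u₂ u₃ := by
      simp only [line, Set.mem_setOf_eq, dist_self]
      right; right; ring
    rw [← heq] at hmem
    rw [mem_line_iff h12 h1 hne13.symm hne23.symm] at hmem
    rw [dist_comm u₃ u₁, dist_comm u₃ u₂] at hmem
    rw [h3, h2] at hmem
    norm_num at hmem
  · rw [Twins, not_and] at ht
    push_neg at ht
    obtain ⟨w, hw1, hw3, hww⟩ := ht h3
    have hw2 : w ≠ u₂ := by
      rintro rfl
      rw [h1, dist_comm u₃ w, h2] at hww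
      exact hww rfl
    have hiff1 : w ∈ line u₁ u₂ ↔ dist w u₁ + dist w u₂ = 3 :=
      mem_line_iff h12 h1 hw1 hw2
    have hiff2 : w ∈ line u₂ u₃ ↔ dist w u₂ + dist w u₃ = 3 :=
      mem_line_iff h12 h2 hw2 hw3
    have key : dist w u₁ + dist w u₂ = 3 ↔ dist w u₂ + dist w u₃ = 3 := by
      rw [← hiff1, ← hiff2, heq]
    rw [dist_comm u₁ w, dist_comm u₃ w] at hww
    rcases h12 w u₁ hw1 with a | a <;> rcases h12 w u₂ hw2 with b | b <;>
      rcases h12 w u₃ hw3 with c | c <;> rw [a, c] at hww <;>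
      rw [a, b, c] at key <;> norm_num at hww <;> norm_num at key
end

section
/- In a 1-2 metric space, if u and v are twins and x, y are distinct points both different from u and v, then the line through x and y contains either both u and v or neither of them. -/
theorem stmt4 {α : Type*} [MetricSpace α] (h12 : OneTwo α)
    (u v x y : α) (htw : Twins u v) (hxy : x ≠ y)
    (hxu : x ≠ u) (hxv : x ≠ v) (hyu : y ≠ u) (hyv : y ≠ v) :
    (u ∈ line x y ↔ v ∈ line x y) := by
  have hx : dist u x = dist v x := htw.2 x hxu hxv
  have hy : dist u y = dist v y := htw.2 y hyu hyv
  simp only [line, Set.mem_setOf_eq, dist_comm x u, dist_comm y u, dist_comm x v, dist_comm y v,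
    hx, hy]
end

section
/- In a finite 1-2 metric space S, if {u,v,w} is a three-point subset such that all pairwise distances within {u,v,w} equal 2 and dist(t,x)=1 for every t in {u,v,w} and every x outside {u,v,w}, then the line through u and v equals S \ {w}. -/
theorem stmt7 {α : Type*} [MetricSpace α] [Fintype α] (h12 : OneTwo α)
    (u v w : α) (huv : u ≠ v) (huw : u ≠ w) (hvw : v ≠ w)
    (h2 : dist u v = 2 ∧ dist u w = 2 ∧ dist v w = 2)
    (h1 : ∀ t x : α, t ∈ ({u, v, w} : Set α) → x ∉ ({u, v, w} : Set α) →
      dist t x = 1) :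
    line u v = Set.univ \ {w} := by
  obtain ⟨huv2, huw2, hvw2⟩ := h2
  ext p
  simp only [line, Set.mem_setOf_eq, Set.mem_diff, Set.mem_univ, Set.mem_singleton_iff,
    true_and]
  constructor
  · rintro (h | h | h) rfl
    · rw [dist_comm p u, huw2, huv2, dist_comm p v, hvw2] at h; linarith
    · rw [huw2, dist_comm p v, hvw2, huv2] at h; linarith
    · rw [huv2, hvw2, huw2] at h; linarith
  · intro hp
    by_cases hu : p = u
    · subst hu; right; left; simp [huv2]
    by_cases hv : p = v
    · subst hv; right; left; simp [huv2]
    · have h1u := h1 u p (by simp) (by simp only [Set.mem_insert_iff, Set.mem_singleton_iff]; tauto)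
      have h1v := h1 v p (by simp) (by simp only [Set.mem_insert_iff, Set.mem_singleton_iff]; tauto)
      right; left; rw [h1u, dist_comm p v, h1v, huv2]; norm_num
end

section
/- In a finite 1-2 metric space on n points, if some equivalence class of the relation 'determining the same line' on pairs of distinct points consists of n/2 pairwise disjoint pairs with identical distance labels, then the corresponding line is universal (equals the whole space). -/
theorem stmt8 {α : Type*} [MetricSpace α] [Fintype α] (h12 : OneTwo α)
    (L : Set α) (M : Finset (Sym2 α)) (d : ℝ)
    (hclass : ∀ x y : α, x ≠ y → (Sym2.mk x y ∈ M ↔ line x y = L))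
    (hline : ∀ x y : α, Sym2.mk x y ∈ M → x ≠ y ∧ line x y = L)
    (hlab : ∀ x y : α, Sym2.mk x y ∈ M → dist x y = d)
    (hdisj : (M : Set (Sym2 α)).Pairwise fun e f => ∀ z : α, z ∈ e → z ∉ f)
    (hcard : 2 * M.card = Fintype.card α) :
    L = Set.univ := by
  classical
  -- the finset of points covered by an edge
  set F : Sym2 α → Finset α := fun e => Finset.univ.filter (· ∈ e) with hF
  have hFmem : ∀ (e : Sym2 α) (z : α), z ∈ F e ↔ z ∈ e := by
    intro e z; simp [hF]
  have hFcard : ∀ e ∈ M, (F e).card = 2 := by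
    intro e he
    induction e using Sym2.ind with
    | _ x y =>
      obtain ⟨hxy, -⟩ := hline x y he
      have : F (Sym2.mk x y) = {x, y} := by
        ext z; simp [hFmem, Sym2.mem_iff]
      rw [this, Finset.card_insert_of_notMem (by simp [hxy]), Finset.card_singleton]
  have hdisj' : (M : Set (Sym2 α)).PairwiseDisjoint F := by
    intro e he f hf hef
    refine Finset.disjoint_left.mpr ?_
    intro z hz hz'
    exact hdisj he hf hef z ((hFmem e z).mp hz) ((hFmem f z).mp hz')
  have hcover : M.biUnion F = Finset.univ := by
    apply Finset.eq_univ_of_card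
    rw [Finset.card_biUnion (fun e he f hf hef => hdisj' he hf hef)]
    rw [Finset.sum_congr rfl hFcard, Finset.sum_const, smul_eq_mul, mul_comm]
    exact hcard
  ext p
  simp only [Set.mem_univ, iff_true]
  have hp : p ∈ M.biUnion F := hcover ▸ Finset.mem_univ p
  obtain ⟨e, he, hpe⟩ := Finset.mem_biUnion.mp hp
  have hpe' : p ∈ e := (hFmem e p).mp hpe
  induction e using Sym2.ind with
  | _ x y =>
    obtain ⟨hxy, hL⟩ := hline x y he
    rw [← hL]
    rcases Sym2.mem_iff.mp hpe' with rfl | rfl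
    · right; left; simp
    · right; right; simp [dist_comm]
end

section
/- In a 1-2 metric space with no pair of twins and no universal line, on n points, the size of each equivalence class of the relation 'determining the same line' on unordered pairs of distinct points is at most max{(n-1)/2, 4}. -/
section Aux

variable {α : Type*} [MetricSpace α]

lemma dist_le_two (h12 : OneTwo α) (x y : α) : dist x y ≤ 2 := by
  by_cases h : x = y
  · simp [h]
  · rcases h12 x y h with h' | h' <;> rw [h'] <;> norm_num

lemma left_mem_line (u v : α) : u ∈ line u v := by
  simp [line]

lemma right_mem_line (u v : α) : v ∈ line u v := by
  simp [line]

lemma line_comm (u v : α) : line u v = line v u := by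
  ext p
  simp only [line, Set.mem_setOf_eq]
  rw [dist_comm v u, dist_comm v p, dist_comm u p]
  constructor <;> rintro (h | h | h)
  · exact Or.inr (Or.inr (by linarith))
  · exact Or.inr (Or.inl (by linarith))
  · exact Or.inl (by linarith)
  · exact Or.inr (Or.inr (by linarith))
  · exact Or.inr (Or.inl (by linarith))
  · exact Or.inl (by linarith)

lemma mem_line_two (h12 : OneTwo α) {u v : α} (h2 : dist u v = 2) (p : α) :
    p ∈ line u v ↔ p = u ∨ p = v ∨ (dist p u = 1 ∧ dist p v = 1) := by
  constructor
  · rintro (h | h | h)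
    · left
      have h1 : dist p v ≤ 2 := dist_le_two h12 p v
      have : dist p u = 0 := by linarith [dist_nonneg (x := p) (y := u)]
      exact dist_eq_zero.mp this
    · by_cases hpu : p = u
      · exact Or.inl hpu
      by_cases hpv : p = v
      · exact Or.inr (Or.inl hpv)
      right; right
      have h3 : dist u p = 1 ∨ dist u p = 2 := h12 u p (fun h' => hpu h'.symm)
      have h4 : dist p v = 1 ∨ dist p v = 2 := h12 p v hpv
      constructor
      · rw [dist_comm]; rcases h3 with h' | h' <;> rcases h4 with h'' | h'' <;> linarith
      · rcases h3 with h' | h' <;> rcases h4 with h'' | h'' <;> linarith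
    · right; left
      have h1 : dist u p ≤ 2 := dist_le_two h12 u p
      have : dist v p = 0 := by linarith [dist_nonneg (x := v) (y := p)]
      exact (dist_eq_zero.mp this).symm
  · rintro (rfl | rfl | ⟨ha, hb⟩)
    · exact left_mem_line _ _
    · exact right_mem_line _ _
    · right; left; rw [dist_comm u p]; rw [h2]; linarith

lemma mem_line_one (h12 : OneTwo α) {u v : α} (h1 : dist u v = 1) (p : α) :
    p ∈ line u v ↔ p = u ∨ p = v ∨ (dist p u = 1 ∧ dist p v = 2) ∨
      (dist p u = 2 ∧ dist p v = 1) := by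
  constructor
  · rintro (h | h | h)
    · by_cases hpu : p = u
      · exact Or.inl hpu
      have h3 : dist p u = 1 ∨ dist p u = 2 := h12 p u hpu
      have h4 : dist p v ≤ 2 := dist_le_two h12 p v
      rcases h3 with h' | h'
      · right; right; left; exact ⟨h', by linarith⟩
      · linarith
    · by_cases hpu : p = u
      · exact Or.inl hpu
      by_cases hpv : p = v
      · exact Or.inr (Or.inl hpv)
      have h3 : dist u p = 1 ∨ dist u p = 2 := h12 u p (fun h' => hpu h'.symm)
      have h4 : dist p v = 1 ∨ dist p v = 2 := h12 p v hpv
      rcases h3 with h' | h' <;> rcases h4 with h'' | h'' <;> linarith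
    · by_cases hpv : p = v
      · exact Or.inr (Or.inl hpv)
      have h3 : dist v p = 1 ∨ dist v p = 2 := h12 v p (fun h' => hpv h'.symm)
      have h4 : dist u p ≤ 2 := dist_le_two h12 u p
      rcases h3 with h' | h'
      · right; right; right
        rw [dist_comm p u, dist_comm p v]
        exact ⟨by linarith, h'⟩
      · linarith
  · rintro (rfl | rfl | ⟨ha, hb⟩ | ⟨ha, hb⟩)
    · exact left_mem_line _ _
    · exact right_mem_line _ _
    · left; rw [h1, ha, hb]; norm_num
    · right; right; rw [dist_comm v p, dist_comm u p, h1, ha, hb]; norm_num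

/-- Two distance-2 pairs sharing a point and the same line are equal. -/
lemma share22 (h12 : OneTwo α) {a b c : α} (hab : a ≠ b) (hac : a ≠ c) (hbc : b ≠ c)
    (d2ab : dist a b = 2) (d2ac : dist a c = 2) (hL : line a b = line a c) : False := by
  have hc : c ∈ line a b := hL ▸ right_mem_line a c
  rw [mem_line_two h12 d2ab c] at hc
  rcases hc with rfl | rfl | ⟨h', _⟩
  · exact hac rfl
  · exact hbc rfl
  · rw [dist_comm] at h'; rw [d2ac] at h'; norm_num at h'

/-- Two distance-1 pairs sharing a point and the same line give twins. -/
lemma share11 (h12 : OneTwo α) (hnt : ∀ u v : α, ¬ Twins u v) {a b c : α}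
    (hab : a ≠ b) (hac : a ≠ c) (hbc : b ≠ c)
    (d1ab : dist a b = 1) (d1ac : dist a c = 1) (hL : line a b = line a c) : False := by
  have hb : b ∈ line a c := hL ▸ right_mem_line a b
  rw [mem_line_one h12 d1ac b] at hb
  have hba : dist b a = 1 := by rw [dist_comm]; exact d1ab
  have hbc2 : dist b c = 2 := by
    rcases hb with rfl | rfl | ⟨_, h'⟩ | ⟨h', _⟩
    · exact absurd rfl hab
    · exact absurd rfl hbc
    · exact h'
    · rw [hba] at h'; norm_num at h'
  refine hnt b c ⟨hbc2, fun w hwb hwc => ?_⟩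
  by_cases hwa : w = a
  · subst hwa
    rw [hba, dist_comm c w]; exact d1ac.symm
  · have hiff : w ∈ line a b ↔ w ∈ line a c := by rw [hL]
    rw [mem_line_one h12 d1ab w, mem_line_one h12 d1ac w] at hiff
    have hwa1 : dist w a = 1 ∨ dist w a = 2 := h12 w a hwa
    have hwb1 : dist w b = 1 ∨ dist w b = 2 := h12 w b hwb
    have hwc1 : dist w c = 1 ∨ dist w c = 2 := h12 w c hwc
    rw [dist_comm b w, dist_comm c w]
    rcases hwa1 with h' | h' <;> rcases hwb1 with h'' | h'' <;>
      rcases hwc1 with h''' | h''' <;> simp_all <;>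
      first
        | rfl
        | (exfalso; revert hiff; simp_all; intros; try linarith) 

/-- A distance-2 pair and a distance-1 pair with the same line must intersect. -/
lemma mixed_meet (h12 : OneTwo α) {a b c e : α} (hab : a ≠ b) (hce : c ≠ e)
    (d2 : dist a b = 2) (d1 : dist c e = 1) (hL : line a b = line c e) :
    a = c ∨ a = e ∨ b = c ∨ b = e := by
  by_contra h
  push_neg at h
  obtain ⟨hac, hae, hbc, hbe⟩ := h
  have hc : c ∈ line a b := hL ▸ left_mem_line c e
  have he : e ∈ line a b := hL ▸ right_mem_line c e
  rw [mem_line_two h12 d2 c] at hc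
  rw [mem_line_two h12 d2 e] at he
  have hc' : dist c a = 1 := by
    rcases hc with rfl | rfl | ⟨h', _⟩
    · exact absurd rfl hac
    · exact absurd rfl hbc
    · exact h'
  have he' : dist e a = 1 := by
    rcases he with rfl | rfl | ⟨h', _⟩
    · exact absurd rfl hae
    · exact absurd rfl hbe
    · exact h'
  have ha : a ∈ line c e := hL ▸ left_mem_line a b
  rw [mem_line_one h12 d1 a] at ha
  rcases ha with rfl | rfl | ⟨h', h''⟩ | ⟨h', h''⟩
  · exact hac rfl
  · exact hae rfl
  · rw [dist_comm a e] at h''; rw [he'] at h''; norm_num at h''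
  · rw [dist_comm a c] at h'; rw [hc'] at h'; norm_num at h'

/-- Two pairs of the same distance type with the same line sharing a point are equal. -/
lemma eq_of_shared (h12 : OneTwo α) (hnt : ∀ u v : α, ¬ Twins u v)
    {x y x' y' p : α} (h1 : x ≠ y) (h2 : x' ≠ y')
    (hL : line x y = line x' y') (hd : dist x y = dist x' y')
    (hp : p ∈ Sym2.mk x y) (hp' : p ∈ Sym2.mk x' y') :
    Sym2.mk x y = Sym2.mk x' y' := by
  have key : ∀ a b c : α, a ≠ b → a ≠ c → dist a b = dist a c →
      line a b = line a c → b ≠ c → False := by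
    intro a b c hab hac hd' hL' hbc
    rcases h12 a b hab with h' | h'
    · exact share11 h12 hnt hab hac hbc h' (hd' ▸ h') hL'
    · exact share22 h12 hab hac hbc h' (hd' ▸ h') hL'
  rw [Sym2.mem_iff] at hp hp'
  rw [Sym2.eq_iff]
  have hLyx : line y x = line x y := line_comm y x
  have hLyx' : line y' x' = line x' y' := line_comm y' x'
  have hdyx : dist y x = dist x y := dist_comm y x
  have hdyx' : dist y' x' = dist x' y' := dist_comm y' x'
  rcases hp with rfl | rfl <;> rcases hp' with rfl | rfl
  · -- p = x = x'
    by_cases h : y = y'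
    · left; exact ⟨rfl, h⟩
    · exact absurd (key p y y' h1 h2 (by rw [hd]) hL h) (by simp)
  · -- p = x = y'
    by_cases h : y = x'
    · right; exact ⟨rfl, h⟩
    · exact absurd (key p y x' h1 (Ne.symm h2) (by rw [hd, hdyx'])
        (by rw [hL, hLyx']) h) (by simp)
  · -- p = y = x'
    by_cases h : x = y'
    · right; exact ⟨h, rfl⟩
    · exact absurd (key p x y' (Ne.symm h1) h2 (by rw [hdyx, hd])
        (by rw [hLyx, hL]) h) (by simp)
  · -- p = y = y'
    by_cases h : x = x'
    · left; exact ⟨h, rfl⟩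
    · exact absurd (key p x x' (Ne.symm h1) (Ne.symm h2)
        (by rw [hdyx, hd, hdyx']) (by rw [hLyx, hL, hLyx']) h) (by simp)

end Aux

theorem stmt10 {α : Type*} [MetricSpace α] [Fintype α] (h12 : OneTwo α)
    (hnt : ∀ u v : α, ¬ Twins u v)
    (hnu : ¬ ∃ u v : α, u ≠ v ∧ line u v = Set.univ)
    (L : Set α) (C : Set (Sym2 α))
    (hclass : ∀ x y : α, Sym2.mk x y ∈ C ↔ (x ≠ y ∧ line x y = L)) :
    C.ncard ≤ max ((Fintype.card α - 1) / 2) 4 := by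
  classical
  -- representation of elements of C
  have hrep : ∀ s ∈ C, ∃ x y : α, x ≠ y ∧ line x y = L ∧ s = Sym2.mk x y := by
    intro s hs
    induction s using Sym2.ind with
    | _ x y =>
      obtain ⟨hxy, hLxy⟩ := (hclass x y).mp hs
      exact ⟨x, y, hxy, hLxy, rfl⟩
  rcases Set.eq_empty_or_nonempty C with hCe | hCne
  · simp [hCe]
  obtain ⟨s₀, hs₀⟩ := hCne
  obtain ⟨x₀, y₀, hx₀y₀, hL₀, -⟩ := hrep s₀ hs₀
  -- a point outside L
  have hLne : L ≠ Set.univ := fun h => hnu ⟨x₀, y₀, hx₀y₀, hL₀.trans h⟩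
  obtain ⟨z, hz⟩ : ∃ z, z ∉ L := by
    by_contra h
    push_neg at h
    exact hLne (Set.eq_univ_of_forall h)
  by_cases hmix : (∃ s ∈ C, ∃ x y : α, x ≠ y ∧ s = Sym2.mk x y ∧ dist x y = 1) ∧
      (∃ s ∈ C, ∃ x y : α, x ≠ y ∧ s = Sym2.mk x y ∧ dist x y = 2)
  · -- mixed case: at most 4
    obtain ⟨⟨s₁, hs₁, c, e, hce, hs₁e, hd1⟩, ⟨s₂, hs₂, a, b, hab, hs₂e, hd2⟩⟩ := hmix
    have hLce : line c e = L := ((hclass c e).mp (hs₁e ▸ hs₁)).2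
    have hLab : line a b = L := ((hclass a b).mp (hs₂e ▸ hs₂)).2
    -- every dist-1 pair in C meets {a, b}
    have hmem1 : ∀ x y : α, x ≠ y → Sym2.mk x y ∈ C → dist x y = 1 →
        a ∈ Sym2.mk x y ∨ b ∈ Sym2.mk x y := by
      intro x y hxy hs hd
      have hLxy : line x y = L := ((hclass x y).mp hs).2
      have := mixed_meet h12 hab hxy hd2 hd (hLab.trans hLxy.symm)
      rw [Sym2.mem_iff, Sym2.mem_iff]
      tauto
    -- every dist-2 pair in C meets {c, e}
    have hmem2 : ∀ x y : α, x ≠ y → Sym2.mk x y ∈ C → dist x y = 2 →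
        c ∈ Sym2.mk x y ∨ e ∈ Sym2.mk x y := by
      intro x y hxy hs hd
      have hLxy : line x y = L := ((hclass x y).mp hs).2
      have := mixed_meet h12 hxy hce hd hd1 (hLxy.trans hLce.symm)
      rw [Sym2.mem_iff, Sym2.mem_iff]
      tauto
    set C1 : Set (Sym2 α) :=
      {s | s ∈ C ∧ ∃ x y : α, x ≠ y ∧ s = Sym2.mk x y ∧ dist x y = 1} with hC1
    set C2 : Set (Sym2 α) :=
      {s | s ∈ C ∧ ∃ x y : α, x ≠ y ∧ s = Sym2.mk x y ∧ dist x y = 2} with hC2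
    have hsub : C ⊆ C1 ∪ C2 := by
      intro s hs
      obtain ⟨x, y, hxy, hLxy, hsxy⟩ := hrep s hs
      rcases h12 x y hxy with h' | h'
      · exact Or.inl ⟨hs, x, y, hxy, hsxy, h'⟩
      · exact Or.inr ⟨hs, x, y, hxy, hsxy, h'⟩
    have hb1 : C1.ncard ≤ 2 := by
      have hmaps : ∀ s ∈ C1, (if a ∈ s then a else b) ∈ ({a, b} : Set α) := by
        intro s _
        split <;> simp
      have hinj : Set.InjOn (fun s => if a ∈ s then a else b) C1 := by
        rintro s ⟨hsC, x, y, hxy, rfl, hdx⟩ t ⟨htC, x', y', hxy', rfl, hdx'⟩ hg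
        simp only at hg
        have hLs : line x y = L := ((hclass x y).mp hsC).2
        have hLt : line x' y' = L := ((hclass x' y').mp htC).2
        have h1 := hmem1 x y hxy hsC hdx
        have h2 := hmem1 x' y' hxy' htC hdx'
        by_cases has : a ∈ Sym2.mk x y <;> by_cases hat : a ∈ Sym2.mk x' y'
        · exact eq_of_shared h12 hnt hxy hxy' (hLs.trans hLt.symm)
            (hdx.trans hdx'.symm) has hat
        · simp only [if_pos has, if_neg hat] at hg
          exact absurd hg hab
        · simp only [if_neg has, if_pos hat] at hg
          exact absurd hg.symm hab
        · have hbs : b ∈ Sym2.mk x y := h1.resolve_left has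
          have hbt : b ∈ Sym2.mk x' y' := h2.resolve_left hat
          exact eq_of_shared h12 hnt hxy hxy' (hLs.trans hLt.symm)
            (hdx.trans hdx'.symm) hbs hbt
      calc C1.ncard ≤ ({a, b} : Set α).ncard :=
            Set.ncard_le_ncard_of_injOn _ hmaps hinj (Set.toFinite _)
        _ = 2 := Set.ncard_pair hab
    have hb2 : C2.ncard ≤ 2 := by
      have hmaps : ∀ s ∈ C2, (if c ∈ s then c else e) ∈ ({c, e} : Set α) := by
        intro s _
        split <;> simp
      have hinj : Set.InjOn (fun s => if c ∈ s then c else e) C2 := by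
        rintro s ⟨hsC, x, y, hxy, rfl, hdx⟩ t ⟨htC, x', y', hxy', rfl, hdx'⟩ hg
        simp only at hg
        have hLs : line x y = L := ((hclass x y).mp hsC).2
        have hLt : line x' y' = L := ((hclass x' y').mp htC).2
        have h1 := hmem2 x y hxy hsC hdx
        have h2 := hmem2 x' y' hxy' htC hdx'
        by_cases has : c ∈ Sym2.mk x y <;> by_cases hat : c ∈ Sym2.mk x' y'
        · exact eq_of_shared h12 hnt hxy hxy' (hLs.trans hLt.symm)
            (hdx.trans hdx'.symm) has hat
        · simp only [if_pos has, if_neg hat] at hg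
          exact absurd hg hce
        · simp only [if_neg has, if_pos hat] at hg
          exact absurd hg.symm hce
        · have hbs : e ∈ Sym2.mk x y := h1.resolve_left has
          have hbt : e ∈ Sym2.mk x' y' := h2.resolve_left hat
          exact eq_of_shared h12 hnt hxy hxy' (hLs.trans hLt.symm)
            (hdx.trans hdx'.symm) hbs hbt
      calc C2.ncard ≤ ({c, e} : Set α).ncard :=
            Set.ncard_le_ncard_of_injOn _ hmaps hinj (Set.toFinite _)
        _ = 2 := Set.ncard_pair hce
    have : C.ncard ≤ 4 := by
      calc C.ncard ≤ (C1 ∪ C2).ncard :=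
            Set.ncard_le_ncard hsub (Set.toFinite _)
        _ ≤ C1.ncard + C2.ncard := Set.ncard_union_le _ _
        _ ≤ 4 := by omega
    exact le_trans this (le_max_right _ _)
  · -- pure case: all pairs have the same distance, hence are pairwise disjoint
    have hconst : ∃ d : ℝ, ∀ s ∈ C, ∀ x y : α, x ≠ y → s = Sym2.mk x y →
        dist x y = d := by
      rcases not_and_or.mp hmix with h | h
      · refine ⟨2, fun s hs x y hxy hsxy => ?_⟩
        rcases h12 x y hxy with h' | h'
        · exact absurd ⟨s, hs, x, y, hxy, hsxy, h'⟩ h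
        · exact h'
      · refine ⟨1, fun s hs x y hxy hsxy => ?_⟩
        rcases h12 x y hxy with h' | h'
        · exact h'
        · exact absurd ⟨s, hs, x, y, hxy, hsxy, h'⟩ h
    obtain ⟨d, hd⟩ := hconst
    have hdisj : ∀ s ∈ C, ∀ t ∈ C, s ≠ t → ∀ p : α, p ∈ s → p ∉ t := by
      intro s hs t ht hst p hps hpt
      obtain ⟨x, y, hxy, hLxy, rfl⟩ := hrep s hs
      obtain ⟨x', y', hxy', hLxy', rfl⟩ := hrep t ht
      exact hst (eq_of_shared h12 hnt hxy hxy' (hLxy.trans hLxy'.symm)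
        ((hd _ hs x y hxy rfl).trans (hd _ ht x' y' hxy' rfl).symm) hps hpt)
    -- finset counting
    have hCfin : C.Finite := Set.toFinite C
    set Cf : Finset (Sym2 α) := hCfin.toFinset with hCf
    set f : Sym2 α → Finset α := fun s => Finset.univ.filter (· ∈ s) with hf
    have hfcard : ∀ s ∈ Cf, (f s).card = 2 := by
      intro s hs
      rw [Set.Finite.mem_toFinset] at hs
      obtain ⟨x, y, hxy, -, rfl⟩ := hrep s hs
      have : f (Sym2.mk x y) = {x, y} := by
        ext w
        simp [hf, Sym2.mem_iff]
      rw [this, Finset.card_pair hxy]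
    have hfdisj : ∀ s ∈ Cf, ∀ t ∈ Cf, s ≠ t → Disjoint (f s) (f t) := by
      intro s hs t ht hst
      rw [Set.Finite.mem_toFinset] at hs ht
      rw [Finset.disjoint_left]
      intro p hps hpt
      simp only [hf, Finset.mem_filter] at hps hpt
      exact hdisj s hs t ht hst p hps.2 hpt.2
    have hbusub : Cf.biUnion f ⊆ Finset.univ.erase z := by
      intro w hw
      rw [Finset.mem_biUnion] at hw
      obtain ⟨s, hs, hws⟩ := hw
      rw [Set.Finite.mem_toFinset] at hs
      simp only [hf, Finset.mem_filter] at hws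
      obtain ⟨x, y, hxy, hLxy, rfl⟩ := hrep s hs
      have hwL : w ∈ L := by
        rw [← hLxy]
        rcases Sym2.mem_iff.mp hws.2 with rfl | rfl
        · exact left_mem_line _ _
        · exact right_mem_line _ _
      exact Finset.mem_erase.mpr ⟨fun h => hz (h ▸ hwL), Finset.mem_univ w⟩
    have hcount : 2 * Cf.card ≤ Fintype.card α - 1 := by
      have h1 : (Cf.biUnion f).card = ∑ s ∈ Cf, (f s).card :=
        Finset.card_biUnion hfdisj
      have h2 : ∑ s ∈ Cf, (f s).card = 2 * Cf.card := by
        rw [Finset.sum_congr rfl hfcard, Finset.sum_const, smul_eq_mul, mul_comm]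
      have h3 : (Cf.biUnion f).card ≤ (Finset.univ.erase z).card :=
        Finset.card_le_card hbusub
      have h4 : (Finset.univ.erase z).card = Fintype.card α - 1 := by
        rw [Finset.card_erase_of_mem (Finset.mem_univ z), Finset.card_univ]
      omega
    have hncard : C.ncard = Cf.card := Set.ncard_eq_toFinset_card C hCfin
    have : C.ncard ≤ (Fintype.card α - 1) / 2 := by omega
    exact le_trans this (le_max_left _ _)
end

section
/- In a 1-2 metric space, if four distinct points u,v,w,x satisfy dist(u,v)=2, dist(v,w)=1, dist(w,x)=2 and the lines through u,v, through v,w, and through w,x all coincide, then dist(u,w)=dist(u,x)=dist(v,w)=dist(v,x)=1. -/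
theorem stmt14 {α : Type*} [MetricSpace α] (h12 : OneTwo α)
    (u v w x : α) (h : [u, v, w, x].Pairwise (· ≠ ·))
    (h1 : dist u v = 2) (h2 : dist v w = 1) (h3 : dist w x = 2)
    (hl : line u v = line v w ∧ line v w = line w x) :
    dist u w = 1 ∧ dist u x = 1 ∧ dist v w = 1 ∧ dist v x = 1 := by
  simp only [List.pairwise_cons, List.mem_cons, List.mem_singleton, List.not_mem_nil,
    List.Pairwise] at h
  obtain ⟨hA, hB, hC, -⟩ := h
  have huv : u ≠ v := hA v (by simp)
  have huw : u ≠ w := hA w (by simp)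
  have hux : u ≠ x := hA x (by simp)
  have hvx : v ≠ x := hB x (by simp)
  have duw := h12 u w huw
  have dux := h12 u x hux
  have dvx := h12 v x hvx
  have hu_mem : u ∈ line w x := by
    have hm : u ∈ line u v := by
      left; simp
    rw [hl.1, hl.2] at hm; exact hm
  have hx_mem : x ∈ line u v := by
    have hm : x ∈ line w x := by
      right; right; simp
    rw [← hl.2, ← hl.1] at hm; exact hm
  have cwu : dist w u = dist u w := dist_comm w u
  have cwx : dist x w = dist w x := dist_comm x w
  have cxu : dist x u = dist u x := dist_comm x u
  have cxv : dist x v = dist v x := dist_comm x v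
  have cvu : dist v u = dist u v := dist_comm v u
  have huw1 : dist u w = 1 ∧ dist u x = 1 := by
    rcases hu_mem with hc | hc | hc <;>
      constructor <;> rcases duw with d1 | d1 <;> rcases dux with d2 | d2 <;>
        linarith
  have hxv1 : dist v x = 1 := by
    rcases hx_mem with hc | hc | hc <;>
      rcases dux with d2 | d2 <;> rcases dvx with d3 | d3 <;> linarith
  exact ⟨huw1.1, huw1.2, h2, hxv1⟩
end

section
/- Every metric space on 2, 3, or 4 points either has at least as many distinct lines as points or has a universal line. -/
section Aux

variable {α : Type*} [MetricSpace α]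

/-- The triple `u v w` is degenerate as seen from the pair `u v`:
this is precisely the condition `w ∈ line u v`. -/
def Deg (u v w : α) : Prop :=
  dist w u + dist u v = dist w v ∨ dist u w + dist w v = dist u v ∨
    dist u v + dist v w = dist u w

lemma mem_line_iff_s16 {u v p : α} : p ∈ line u v ↔ Deg u v p := Iff.rfl

lemma deg_self_left (u v : α) : Deg u v u := by
  left; simp

lemma deg_self_right (u v : α) : Deg u v v := by
  right; right; simp

lemma degS {u v w : α} (h : Deg u v w) : Deg v u w := by
  rcases h with h | h | h
  · right; right
    have := dist_comm w u; have := dist_comm u v; have := dist_comm w v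
    linarith
  · right; left
    have := dist_comm u w; have := dist_comm w v; have := dist_comm u v
    linarith
  · left
    have := dist_comm u v; have := dist_comm v w; have := dist_comm u w
    linarith

lemma degR {u v w : α} (h : Deg u v w) : Deg u w v := by
  rcases h with h | h | h
  · left
    have := dist_comm w u; have := dist_comm u v; have := dist_comm w v
    linarith
  · right; right
    have := dist_comm u w; have := dist_comm w v; have := dist_comm u v
    linarith
  · right; left
    have := dist_comm u v; have := dist_comm v w; have := dist_comm u w
    linarith

lemma ndegR {u v w : α} (h : ¬ Deg u v w) : ¬ Deg u w v := fun h' => h (degR h')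

lemma ndegS {u v w : α} (h : ¬ Deg u v w) : ¬ Deg v u w := fun h' => h (degS h')

end Aux

theorem stmt16 (α : Type*) [MetricSpace α] [Fintype α]
    (hn : Fintype.card α = 2 ∨ Fintype.card α = 3 ∨ Fintype.card α = 4) :
    Fintype.card α ≤ (linesOf α).ncard ∨
      ∃ u v : α, u ≠ v ∧ line u v = Set.univ := by
  have hfin : (linesOf α).Finite := Set.toFinite _
  rcases hn with h2 | h3 | h4
  · -- two points : the unique line is universal
    right
    have e := Fintype.equivFinOfCardEq h2
    set a := e.symm 0 with ha
    set b := e.symm 1 with hb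
    have hab : a ≠ b := e.symm.injective.ne (by decide)
    refine ⟨a, b, hab, ?_⟩
    ext p
    simp only [Set.mem_univ, iff_true]
    have hp : p = a ∨ p = b := by
      have h4 : ∀ i : Fin 2, i = 0 ∨ i = 1 := by decide
      rcases h4 (e p) with h | h
      · left; rw [ha, ← h]; simp
      · right; rw [hb, ← h]; simp
    rcases hp with rfl | rfl
    · exact deg_self_left a b
    · exact deg_self_right a b
  · -- three points
    have e := Fintype.equivFinOfCardEq h3
    set a := e.symm 0 with ha
    set b := e.symm 1 with hb
    set c := e.symm 2 with hc
    have hab : a ≠ b := e.symm.injective.ne (by decide)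
    have hac : a ≠ c := e.symm.injective.ne (by decide)
    have hbc : b ≠ c := e.symm.injective.ne (by decide)
    have hcov : ∀ p : α, p = a ∨ p = b ∨ p = c := by
      intro p
      have h4 : ∀ i : Fin 3, i = 0 ∨ i = 1 ∨ i = 2 := by decide
      rcases h4 (e p) with h | h | h
      · left; rw [ha, ← h]; simp
      · right; left; rw [hb, ← h]; simp
      · right; right; rw [hc, ← h]; simp
    by_cases hd : Deg a b c
    · right
      refine ⟨a, b, hab, ?_⟩
      ext p
      simp only [Set.mem_univ, iff_true]
      rcases hcov p with rfl | rfl | rfl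
      · exact deg_self_left a b
      · exact deg_self_right a b
      · exact hd
    · -- three distinct lines
      left
      rw [h3]
      have hsub : ({line a b, line a c, line b c} : Set (Set α)) ⊆ linesOf α := by
        rintro L (rfl | rfl | rfl)
        · exact ⟨a, b, hab, rfl⟩
        · exact ⟨a, c, hac, rfl⟩
        · exact ⟨b, c, hbc, rfl⟩
      have h1 : line a b ≠ line a c := by
        intro h
        exact hd (by rw [mem_line_iff_s16.symm, h]; exact degR (deg_self_right a c))
      have h2 : line a b ≠ line b c := by
        intro h
        exact hd (by rw [mem_line_iff_s16.symm, h]; exact deg_self_right b c)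
      have h3' : line a c ≠ line b c := by
        intro h
        have : Deg a c b := by rw [mem_line_iff_s16.symm, h]; exact deg_self_left b c
        exact hd (degR this)
      calc (3 : ℕ) = ({line a b, line a c, line b c} : Set (Set α)).ncard := by
            rw [Set.ncard_insert_of_notMem (by simp [h1, h2]) (Set.toFinite _),
              Set.ncard_pair h3']
        _ ≤ (linesOf α).ncard := Set.ncard_le_ncard hsub hfin
  · -- four points
    have e := Fintype.equivFinOfCardEq h4
    set a := e.symm 0 with ha
    set b := e.symm 1 with hb
    set c := e.symm 2 with hc
    set d := e.symm 3 with hd'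
    have hab : a ≠ b := e.symm.injective.ne (by decide)
    have hac : a ≠ c := e.symm.injective.ne (by decide)
    have had : a ≠ d := e.symm.injective.ne (by decide)
    have hbc : b ≠ c := e.symm.injective.ne (by decide)
    have hbd : b ≠ d := e.symm.injective.ne (by decide)
    have hcd : c ≠ d := e.symm.injective.ne (by decide)
    have hcov : ∀ p : α, p = a ∨ p = b ∨ p = c ∨ p = d := by
      intro p
      have h4' : ∀ i : Fin 4, i = 0 ∨ i = 1 ∨ i = 2 ∨ i = 3 := by decide
      rcases h4' (e p) with h | h | h | h
      · left; rw [ha, ← h]; simp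
      · right; left; rw [hb, ← h]; simp
      · right; right; left; rw [hc, ← h]; simp
      · right; right; right; rw [hd', ← h]; simp
    -- universal-line helper: if both triples through a pair are degenerate
    have univ_of : ∀ u v x y : α, u ≠ v → (∀ p : α, p = u ∨ p = v ∨ p = x ∨ p = y) →
        Deg u v x → Deg u v y →
        ∃ u v : α, u ≠ v ∧ line u v = Set.univ := by
      intro u v x y huv hcov' hx hy
      refine ⟨u, v, huv, ?_⟩
      ext p
      simp only [Set.mem_univ, iff_true]
      rcases hcov' p with rfl | rfl | rfl | rfl
      · exact deg_self_left _ _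
      · exact deg_self_right _ _
      · exact hx
      · exact hy
    -- four-distinct-lines helper: all triples through d nondegenerate
    have four_of : ∀ a b c d : α, a ≠ b → a ≠ c → a ≠ d → b ≠ c → b ≠ d → c ≠ d →
        ¬ Deg a b d → ¬ Deg a c d → ¬ Deg b c d →
        4 ≤ (linesOf α).ncard := by
      intro a b c d hab hac had hbc hbd hcd n1 n2 n3
      have hsub : ({line a b, line a d, line b d, line c d} : Set (Set α)) ⊆ linesOf α := by
        rintro L (rfl | rfl | rfl | rfl)
        · exact ⟨a, b, hab, rfl⟩
        · exact ⟨a, d, had, rfl⟩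
        · exact ⟨b, d, hbd, rfl⟩
        · exact ⟨c, d, hcd, rfl⟩
      -- d distinguishes line a b from the others
      have e1 : line a b ≠ line a d := by
        intro h
        exact n1 (by rw [mem_line_iff_s16.symm, h]; exact deg_self_right a d)
      have e2 : line a b ≠ line b d := by
        intro h
        exact n1 (by rw [mem_line_iff_s16.symm, h]; exact deg_self_right b d)
      have e3 : line a b ≠ line c d := by
        intro h
        exact n1 (by rw [mem_line_iff_s16.symm, h]; exact deg_self_right c d)
      have e4 : line a d ≠ line b d := by
        intro h
        have : Deg a d b := by rw [mem_line_iff_s16.symm, h]; exact deg_self_left b d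
        exact n1 (degR this)
      have e5 : line a d ≠ line c d := by
        intro h
        have : Deg a d c := by rw [mem_line_iff_s16.symm, h]; exact deg_self_left c d
        exact n2 (degR this)
      have e6 : line b d ≠ line c d := by
        intro h
        have : Deg b d c := by rw [mem_line_iff_s16.symm, h]; exact deg_self_left c d
        exact n3 (degR this)
      calc (4 : ℕ)
          = ({line a b, line a d, line b d, line c d} : Set (Set α)).ncard := by
            rw [Set.ncard_insert_of_notMem (by simp [e1, e2, e3]) (Set.toFinite _),
              Set.ncard_insert_of_notMem (by simp [e4, e5]) (Set.toFinite _),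
              Set.ncard_pair e6]
        _ ≤ (linesOf α).ncard := Set.ncard_le_ncard hsub hfin
    rw [h4]
    by_cases D1 : Deg b c d
    · -- bcd degenerate; if any other triple degenerate, universal line
      by_cases D2 : Deg a c d
      · -- share cd : line c d universal
        right
        exact univ_of c d a b hcd
          (fun p => by rcases hcov p with h|h|h|h <;> tauto)
          (degR (degS D2)) (degR (degS D1))
      by_cases D3 : Deg a b d
      · -- bcd & abd share bd
        right
        exact univ_of b d a c hbd
          (fun p => by rcases hcov p with h|h|h|h <;> tauto)
          (degR (degS D3)) (degR D1)
      by_cases D4 : Deg a b c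
      · -- bcd & abc share bc
        right
        exact univ_of b c a d hbc
          (fun p => by rcases hcov p with h|h|h|h <;> tauto)
          (degR (degS D4)) D1
      · -- only bcd degenerate: apex a; triples containing a nondeg
        -- four_of with (b, c, d, a): need ¬Deg b c a, ¬Deg b d a, ¬Deg c d a
        left
        exact four_of b c d a hbc hbd hab.symm hcd hac.symm had.symm
          (fun h => D4 (degS (degR h)))
          (fun h => D3 (degS (degR h)))
          (fun h => D2 (degS (degR h)))
    · by_cases D2 : Deg a c d
      · by_cases D3 : Deg a b d
        · -- acd & abd share ad
          right
          exact univ_of a d b c had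
            (fun p => by rcases hcov p with h|h|h|h <;> tauto)
            (degR D3) (degR D2)
        by_cases D4 : Deg a b c
        · -- acd & abc share ac
          right
          exact univ_of a c b d hac
            (fun p => by rcases hcov p with h|h|h|h <;> tauto)
            (degR D4) D2
        · -- only acd degenerate: apex b
          -- four_of with (a, c, d, b): need ¬Deg a c b, ¬Deg a d b, ¬Deg c d b
          left
          exact four_of a c d b hac had hab hcd hbc.symm hbd.symm
            (ndegR D4) (ndegR D3)
            (fun h => D1 (degS (degR h)))
      · by_cases D3 : Deg a b d
        · by_cases D4 : Deg a b c
          · -- abd & abc share ab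
            right
            exact univ_of a b c d hab hcov D4 D3
          · -- only abd degenerate: apex c
            -- four_of with (a, b, d, c): need ¬Deg a b c, ¬Deg a d c, ¬Deg b d c
            left
            exact four_of a b d c hab had hac hbd hbc hcd.symm
              D4 (ndegR D2) (ndegR D1)
        · -- triples abd, acd, bcd all nondegenerate: apex d
          left
          exact four_of a b c d hab hac had hbc hbd hcd D3 D2 D1
end
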